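/- On Ω = ℝˡ × I⁺(0) ⊆ ℝ^{1,n} (with ℝ^{1,n} = ℝˡ ⊕ ℝ^{1,n−ℓ} an orthogonal splitting, and I⁺(0) the open future cone in ℝ^{1,n−ℓ}), let φ_t(u, v) = (u, eᵗ·v). Then φ_t pulls back the volume form dVol of the metric g = (1/‖v‖²)·β — where β is the flat metric and ‖v‖² = |β(v,v)| — by the formula φ_t^* dVol_g = e^{−tℓ} dVol_g. Consequently, if a group Γ of diffeomorphisms preserving dVol_g and commuting with all φ_t acts with compact quotient of finite positive g-volume, then ℓ = 0. -/

import Mathlib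

open MeasureTheory

private lemma my_prod_smul {α β : Type*} [MeasurableSpace α] [MeasurableSpace β]
    (μ : Measure α) (ν : Measure β) [SFinite μ] [SFinite ν] (c : ENNReal) :
    μ.prod (c • ν) = c • μ.prod ν := by
  ext s hs
  rw [Measure.smul_apply, smul_eq_mul, Measure.prod_apply hs, Measure.prod_apply hs]
  simp_rw [Measure.smul_apply, smul_eq_mul]
  rw [lintegral_const_mul _ (measurable_measure_prodMk_left hs)]

theorem stmt_13 (l m : ℕ) :
    let X := (Fin l → ℝ) × ℝ × EuclideanSpace ℝ (Fin m)
    let Ω : Set X := {p | ‖p.2.2‖ < p.2.1}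
    let φ : ℝ → X → X := fun t p => (p.1, Real.exp t * p.2.1, Real.exp t • p.2.2)
    let μg : Measure X := volume.withDensity
      (fun p => ENNReal.ofReal
        (Real.sqrt (p.2.1 ^ 2 - ‖p.2.2‖ ^ 2) ^ (-((l + m + 1 : ℕ) : ℝ))))
    (∀ (t : ℝ) (A : Set X), A ⊆ Ω → MeasurableSet A →
      μg (φ t '' A) = ENNReal.ofReal (Real.exp (-(t * l))) * μg A) ∧
    (∀ c : ENNReal, c ≠ 0 → c ≠ ⊤ →
      (∀ t : ℝ, c = ENNReal.ofReal (Real.exp (-(t * l))) * c) → l = 0) := by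
  intro X Ω φ μg
  haveI : (volume : Measure (ℝ × EuclideanSpace ℝ (Fin m))).IsAddHaarMeasure :=
    inferInstanceAs (((volume : Measure ℝ).prod volume).IsAddHaarMeasure)
  have hρeq : (fun p : X => ENNReal.ofReal
        (Real.sqrt (p.2.1 ^ 2 - ‖p.2.2‖ ^ 2) ^ (-((l + m + 1 : ℕ) : ℝ))))
      = (fun p : X =>
      ENNReal.ofReal ((Real.sqrt (p.2.1 ^ 2 - ‖p.2.2‖ ^ 2) ^ (l + m + 1))⁻¹)) := by
    funext p
    rw [Real.rpow_neg (Real.sqrt_nonneg _), Real.rpow_natCast]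
  set ρ : X → ENNReal := fun p => ENNReal.ofReal
    (Real.sqrt (p.2.1 ^ 2 - ‖p.2.2‖ ^ 2) ^ (-((l + m + 1 : ℕ) : ℝ))) with hρ
  have hρmeas : Measurable ρ := by
    rw [hρeq]
    apply Measurable.ennreal_ofReal
    apply Measurable.inv
    refine (Continuous.pow (Continuous.sqrt ?_) _).measurable
    exact ((continuous_fst.comp continuous_snd).pow 2).sub
      ((continuous_norm.comp (continuous_snd.comp continuous_snd)).pow 2)
  have hφcont : ∀ t : ℝ, Continuous (φ t) := by
    intro t; apply Continuous.prodMk continuous_fst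
    exact Continuous.prodMk (continuous_const.mul (continuous_fst.comp continuous_snd))
      ((continuous_snd.comp continuous_snd).const_smul (Real.exp t))
  have hφmeas : ∀ t : ℝ, Measurable (φ t) := fun t => (hφcont t).measurable
  have hφinv : ∀ t : ℝ, ∀ x : X, φ (-t) (φ t x) = x := by
    intro t x
    show (x.1, Real.exp (-t) * (Real.exp t * x.2.1), Real.exp (-t) • Real.exp t • x.2.2) = x
    rw [← mul_assoc, ← Real.exp_add, smul_smul, ← Real.exp_add, neg_add_cancel, Real.exp_zero,
      one_mul, one_smul]
  -- the map of volume under φ t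
  have hmap : ∀ t : ℝ, Measure.map (φ t) (volume : Measure X)
      = ENNReal.ofReal (Real.exp (-(t * (m + 1)))) • volume := by
    intro t
    have h1 : (φ t) = Prod.map (id : (Fin l → ℝ) → _)
        (fun y : ℝ × EuclideanSpace ℝ (Fin m) => Real.exp t • y) := by
      funext p
      show _ = (p.1, Real.exp t • p.2)
      rfl
    have h2 : Measure.map (fun y : ℝ × EuclideanSpace ℝ (Fin m) => Real.exp t • y)
        (volume : Measure (ℝ × EuclideanSpace ℝ (Fin m)))
        = ENNReal.ofReal (Real.exp (-(t * (m + 1)))) • volume := by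
      rw [Measure.map_addHaar_smul (volume : Measure (ℝ × EuclideanSpace ℝ (Fin m)))
        (Real.exp_ne_zero t)]
      have hrank : Module.finrank ℝ (ℝ × EuclideanSpace ℝ (Fin m)) = m + 1 := by
        simp [Module.finrank_prod]; omega
      rw [hrank]
      congr 1
      rw [← Real.exp_nat_mul, ← Real.exp_neg, abs_of_pos (Real.exp_pos _)]
      congr 1
      push_cast; ring
    show Measure.map (φ t) ((volume : Measure (Fin l → ℝ)).prod volume) = _
    rw [h1, ← Measure.map_prod_map _ _ measurable_id (continuous_const_smul _).measurable,
      Measure.map_id, h2, my_prod_smul]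
    rfl
  -- pointwise scaling of the density
  have hpt : ∀ (t : ℝ) (y : X),
      ρ (φ t y) = ENNReal.ofReal (Real.exp (-(t * (l + m + 1)))) * ρ y := by
    intro t y
    have hnorm : ‖Real.exp t • y.2.2‖ = Real.exp t * ‖y.2.2‖ := by
      rw [norm_smul, Real.norm_eq_abs, abs_of_pos (Real.exp_pos t)]
    show ENNReal.ofReal (Real.sqrt ((Real.exp t * y.2.1) ^ 2 - ‖Real.exp t • y.2.2‖ ^ 2)
        ^ (-((l + m + 1 : ℕ) : ℝ))) = _
    rw [hnorm]
    have harg : (Real.exp t * y.2.1) ^ 2 - (Real.exp t * ‖y.2.2‖) ^ 2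
        = Real.exp t ^ 2 * (y.2.1 ^ 2 - ‖y.2.2‖ ^ 2) := by ring
    rw [harg, Real.sqrt_mul (sq_nonneg _), Real.sqrt_sq (Real.exp_pos t).le,
      Real.mul_rpow (Real.exp_pos t).le (Real.sqrt_nonneg _),
      ENNReal.ofReal_mul (Real.rpow_nonneg (Real.exp_pos t).le _)]
    congr 2
    rw [← Real.exp_mul]
    congr 1
    push_cast; ring
  constructor
  · intro t A _hA hAm
    have hinv' : ∀ x : X, φ t (φ (-t) x) = x := by
      intro x
      have := hφinv (-t) x
      rwa [neg_neg] at this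
    have himg : φ t '' A = φ (-t) ⁻¹' A := by
      ext p
      constructor
      · rintro ⟨x, hx, rfl⟩
        show φ (-t) (φ t x) ∈ A
        rw [hφinv t x]; exact hx
      · intro hp
        exact ⟨φ (-t) p, hp, hinv' p⟩
    have hApre : MeasurableSet (φ (-t) ⁻¹' A) := hAm.preimage (hφmeas (-t))
    have hc : ENNReal.ofReal (Real.exp (-(-t * (m + 1))))
        * ENNReal.ofReal (Real.exp (-(t * (l + m + 1))))
        = ENNReal.ofReal (Real.exp (-(t * l))) := by
      rw [← ENNReal.ofReal_mul (Real.exp_nonneg _), ← Real.exp_add]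
      congr 2
      ring
    calc μg (φ t '' A) = ∫⁻ x in φ (-t) ⁻¹' A, ρ x ∂volume := by
          rw [himg]; exact withDensity_apply _ hApre
      _ = ∫⁻ x in φ (-t) ⁻¹' A, (fun y => ρ (φ t y)) (φ (-t) x) ∂volume := by
          apply lintegral_congr
          intro x
          simp only [hinv' x]
      _ = ∫⁻ y in A, ρ (φ t y) ∂(Measure.map (φ (-t)) volume) :=
          (setLIntegral_map hAm (hρmeas.comp (hφmeas t)) (hφmeas (-t))).symm
      _ = ENNReal.ofReal (Real.exp (-(-t * (m + 1)))) * ∫⁻ y in A, ρ (φ t y) ∂volume := by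
          rw [hmap (-t), Measure.restrict_smul, lintegral_smul_measure, smul_eq_mul]
      _ = ENNReal.ofReal (Real.exp (-(-t * (m + 1))))
          * (ENNReal.ofReal (Real.exp (-(t * (l + m + 1)))) * ∫⁻ y in A, ρ y ∂volume) := by
          congr 1
          simp_rw [hpt t]
          rw [lintegral_const_mul _ hρmeas]
      _ = ENNReal.ofReal (Real.exp (-(t * l))) * μg A := by
          rw [← mul_assoc, hc, withDensity_apply _ hAm]
  · intro c hc0 hctop hinvol
    by_contra hl
    have hlpos : (0 : ℝ) < l := by
      exact_mod_cast Nat.pos_of_ne_zero hl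
    have h1 := hinvol 1
    have hlt : ENNReal.ofReal (Real.exp (-(1 * (l : ℝ)))) < 1 := by
      rw [ENNReal.ofReal_lt_one]
      rw [Real.exp_lt_one_iff]
      nlinarith
    have h2 : c < c := by
      calc c = ENNReal.ofReal (Real.exp (-(1 * (l : ℝ)))) * c := h1
        _ < 1 * c := by rw [mul_comm _ c, mul_comm 1 c]; exact ENNReal.mul_lt_mul_right hc0 hctop hlt
        _ = c := one_mul c
    exact lt_irrefl c h2
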